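/- arXiv:1602.05407 — 5 statements merged into one kernel-verified Lean document; each statement's English description precedes it below -/
import Mathlib

section
/- Let D ≥ 1 and let p_1, …, p_D be nonnegative real numbers with Σ_{i=1}^D p_i = 1. Then Σ_{(i,j) : p_i+p_j ≠ 0} (p_i−p_j)²/(p_i+p_j) ≥ 2·(D − (Σ_{i=1}^D √p_i)²), where the sum on the left runs over all ordered pairs (i,j) with p_i + p_j ≠ 0. -/
lemma pt_ineq (a b : ℝ) (ha : 0 ≤ a) (hb : 0 ≤ b) :
    (Real.sqrt a - Real.sqrt b) ^ 2 ≤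
      if a + b = 0 then 0 else (a - b) ^ 2 / (a + b) := by
  by_cases h : a + b = 0
  · have ha0 : a = 0 := le_antisymm (by linarith) ha
    have hb0 : b = 0 := by linarith
    simp [h, ha0, hb0]
  · simp only [h, if_false]
    have hab : 0 < a + b := lt_of_le_of_ne (by positivity) (Ne.symm h)
    have hsa := Real.sq_sqrt ha
    have hsb := Real.sq_sqrt hb
    rw [le_div_iff₀ hab]
    nlinarith [Real.sqrt_nonneg a, Real.sqrt_nonneg b, sq_nonneg (Real.sqrt a - Real.sqrt b),
      mul_nonneg (Real.sqrt_nonneg a) (Real.sqrt_nonneg b),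
      sq_nonneg ((Real.sqrt a - Real.sqrt b) * Real.sqrt a * Real.sqrt b)]

/-- for nonnegative reals `p_1, …, p_D` summing to `1`,
`Σ_{(i,j) : p_i+p_j ≠ 0} (p_i−p_j)²/(p_i+p_j) ≥ 2·(D − (Σ_i √p_i)²)`. -/
theorem sum_ratio_ge (D : ℕ) (hD : 1 ≤ D) (p : Fin D → ℝ)
    (hp : ∀ i, 0 ≤ p i) (hsum : ∑ i, p i = 1) :
    2 * (D - (∑ i, Real.sqrt (p i)) ^ 2) ≤
      ∑ i, ∑ j, (if p i + p j = 0 then 0 else (p i - p j) ^ 2 / (p i + p j)) := by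
  set s : Fin D → ℝ := fun i => Real.sqrt (p i) with hs
  have hsq : ∀ i, s i ^ 2 = p i := fun i => Real.sq_sqrt (hp i)
  have hsum2 : ∑ i, s i ^ 2 = 1 := by simp_rw [hsq]; exact hsum
  have expand : ∀ i : Fin D, ∑ j, (s i - s j) ^ 2
      = D * s i ^ 2 - 2 * (s i * ∑ j, s j) + 1 := by
    intro i
    have h1 : ∀ j, (s i - s j) ^ 2 = s i ^ 2 - 2 * (s i * s j) + s j ^ 2 := fun j => by ring
    simp_rw [h1, Finset.sum_add_distrib, Finset.sum_sub_distrib, Finset.sum_const,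
      ← Finset.mul_sum, hsum2, Finset.card_univ, Fintype.card_fin, nsmul_eq_mul]
  have key : ∑ i, ∑ j, (s i - s j) ^ 2 = 2 * (D - (∑ i, s i) ^ 2) := by
    simp_rw [expand, Finset.sum_add_distrib, Finset.sum_sub_distrib, Finset.sum_const,
      ← Finset.mul_sum, ← Finset.sum_mul, hsum2, Finset.card_univ, Fintype.card_fin,
      nsmul_eq_mul]
    ring
  calc 2 * (D - (∑ i, Real.sqrt (p i)) ^ 2) = ∑ i, ∑ j, (s i - s j) ^ 2 := key.symm
    _ ≤ ∑ i, ∑ j, (if p i + p j = 0 then 0 else (p i - p j) ^ 2 / (p i + p j)) := by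
        refine Finset.sum_le_sum fun i _ => Finset.sum_le_sum fun j _ => ?_
        exact pt_ineq (p i) (p j) (hp i) (hp j)
end

section
/- Let d ≥ 1 and N ≥ 0 be integers and let λ : Fin d → ℝ satisfy Σ_{i} λ_i = 0. Then Σ over all k : Fin d → ℕ with Σ_i k_i = N of (Σ_i k_i·λ_i)² equals (N(N+d)/(d(d+1)))·(Σ_i λ_i²)·C(N+d−1, N), where C denotes the binomial coefficient. -/
open Finset

namespace Stmt14Aux

/-- Hockey stick identity. -/
lemma hockey (e r : ℕ) (h : e ≤ r) :
    ∀ N : ℕ, ∑ m ∈ Finset.range (N+1), (m+e).choose r = (N+e+1).choose (r+1)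
  | 0 => by
    simp only [zero_add, Finset.sum_range_one]
    rcases h.lt_or_eq with h' | rfl
    · rw [Nat.choose_eq_zero_of_lt h', Nat.choose_eq_zero_of_lt (by omega)]
    · simp
  | (N+1) => by
    rw [Finset.sum_range_succ, hockey e r h N]
    rw [show N+1+e+1 = N+e+1+1 from by omega]
    rw [Nat.choose_succ_succ (N+e+1) r]
    rw [show N+1+e = N+e+1 from by omega]
    simp only [Nat.succ_eq_add_one]
    omega

lemma sum_antidiagonal_choose (N e r : ℕ) (h : e ≤ r) :
    ∑ p ∈ Finset.HasAntidiagonal.antidiagonal N, (p.2 + e).choose r = (N+e+1).choose (r+1) := by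
  rw [← hockey e r h N, Finset.Nat.sum_antidiagonal_eq_sum_range_succ_mk,
    ← Finset.sum_range_reflect]
  apply Finset.sum_congr rfl
  intro m hm
  simp only [Finset.mem_range] at hm
  congr 1
  omega

lemma sum_comp_perm {M : Type*} [AddCommMonoid M] (d N : ℕ) (σ : Equiv.Perm (Fin d))
    (f : (Fin d → ℕ) → M) :
    ∑ k ∈ Finset.Nat.antidiagonalTuple d N, f (k ∘ σ) =
      ∑ k ∈ Finset.Nat.antidiagonalTuple d N, f k := by
  refine Finset.sum_equiv (Equiv.arrowCongr σ.symm (Equiv.refl ℕ)) ?_ ?_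
  · intro k
    simp only [Finset.Nat.mem_antidiagonalTuple, Equiv.arrowCongr_apply, Equiv.symm_symm,
      Equiv.refl_apply, Function.comp]
    constructor
    · intro hk; rw [← hk]; exact Equiv.sum_comp σ k
    · intro hk; rw [← hk]; exact (Equiv.sum_comp σ k).symm
  · intro k _
    rfl

lemma sum_AT_cons {M : Type*} [AddCommMonoid M] (d N : ℕ) (f : (Fin (d+1) → ℕ) → M) :
    ∑ k ∈ Finset.Nat.antidiagonalTuple (d+1) N, f k =
      ∑ p ∈ Finset.HasAntidiagonal.antidiagonal N,
        ∑ x ∈ Finset.Nat.antidiagonalTuple d p.2, f (Fin.cons p.1 x) := by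
  rw [Finset.sum_sigma']
  refine Finset.sum_nbij' (i := fun k => (⟨(k 0, N - k 0), Fin.tail k⟩ :
      (_ : ℕ × ℕ) × (Fin d → ℕ)))
    (j := fun q => Fin.cons q.1.1 q.2) ?_ ?_ ?_ ?_ ?_
  · intro k hk
    rw [Finset.Nat.mem_antidiagonalTuple, Fin.sum_univ_succ] at hk
    simp only [Finset.mem_sigma, Finset.HasAntidiagonal.mem_antidiagonal, Finset.Nat.mem_antidiagonalTuple]
    constructor
    · omega
    · show ∑ i : Fin d, k i.succ = N - k 0
      omega
  · intro q hq
    obtain ⟨⟨a, b⟩, x⟩ := q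
    simp only [Finset.mem_sigma, Finset.HasAntidiagonal.mem_antidiagonal,
      Finset.Nat.mem_antidiagonalTuple] at hq
    simp only [Finset.Nat.mem_antidiagonalTuple, Fin.sum_cons, hq.2]
    exact hq.1
  · intro k hk
    simp only [Fin.cons_self_tail]
  · intro q hq
    obtain ⟨⟨a, b⟩, x⟩ := q
    simp only [Finset.mem_sigma, Finset.HasAntidiagonal.mem_antidiagonal,
      Finset.Nat.mem_antidiagonalTuple] at hq
    simp only [Fin.cons_zero, Fin.tail_cons]
    have hb : N - a = b := by omega
    rw [hb]
  · intro k hk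
    rw [Fin.cons_self_tail]

lemma moment1 : ∀ (d : ℕ), ∀ N : ℕ, ∀ i : Fin (d+1),
    ∑ k ∈ Finset.Nat.antidiagonalTuple (d+1) N, k i = (N+d).choose (d+1)
  | 0, N, i => by
    show ∑ k ∈ Finset.Nat.antidiagonalTuple 1 N, k i = N.choose 1
    rw [Finset.Nat.antidiagonalTuple_one, Finset.sum_singleton, Fin.eq_zero i]
    simp
  | (d+1), N, i => by
    show ∑ k ∈ Finset.Nat.antidiagonalTuple (d+2) N, k i = (N+d+1).choose (d+2)
    have hperm := sum_comp_perm (d+2) N (Equiv.swap (Fin.succ 0) i) (fun k => k (Fin.succ 0))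
    simp only [Function.comp_apply, Equiv.swap_apply_left] at hperm
    rw [hperm, sum_AT_cons]
    have hin : ∀ p ∈ Finset.HasAntidiagonal.antidiagonal N,
        (∑ x ∈ Finset.Nat.antidiagonalTuple (d+1) p.2, x 0) = (p.2+d).choose (d+1) :=
      fun p _ => moment1 d p.2 0
    simp only [Fin.cons_succ]
    exact (Finset.sum_congr rfl hin).trans (sum_antidiagonal_choose N d (d+1) (Nat.le_succ d))

lemma moment2 : ∀ (d : ℕ), ∀ N : ℕ, ∀ i : Fin (d+1),
    ∑ k ∈ Finset.Nat.antidiagonalTuple (d+1) N, (k i + 1).choose 2 = (N+d+1).choose (d+2)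
  | 0, N, i => by
    show ∑ k ∈ Finset.Nat.antidiagonalTuple 1 N, (k i + 1).choose 2 = (N+1).choose 2
    rw [Finset.Nat.antidiagonalTuple_one, Finset.sum_singleton, Fin.eq_zero i]
    simp
  | (d+1), N, i => by
    show ∑ k ∈ Finset.Nat.antidiagonalTuple (d+2) N, (k i + 1).choose 2
      = (N+(d+1)+1).choose (d+3)
    have hperm := sum_comp_perm (d+2) N (Equiv.swap (Fin.succ 0) i)
      (fun k => (k (Fin.succ 0) + 1).choose 2)
    simp only [Function.comp_apply, Equiv.swap_apply_left] at hperm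
    rw [hperm, sum_AT_cons]
    have hin : ∀ p ∈ Finset.HasAntidiagonal.antidiagonal N,
        (∑ x ∈ Finset.Nat.antidiagonalTuple (d+1) p.2, (x 0 + 1).choose 2)
          = (p.2+(d+1)).choose (d+2) := fun p _ => moment2 d p.2 0
    simp only [Fin.cons_succ]
    exact (Finset.sum_congr rfl hin).trans (sum_antidiagonal_choose N (d+1) (d+2) (Nat.le_succ (d+1)))

lemma sum_range_id_choose : ∀ n : ℕ, ∑ m ∈ Finset.range (n+1), m = (n+1).choose 2
  | 0 => by simp
  | (n+1) => by
    rw [Finset.sum_range_succ, sum_range_id_choose n]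
    have hp : (n+1+1).choose 2 = (n+1).choose 1 + (n+1).choose 2 :=
      Nat.choose_succ_succ (n+1) 1
    have h1 : (n+1).choose 1 = n+1 := Nat.choose_one_right _
    omega

lemma sum_range_mul : ∀ N : ℕ, ∑ m ∈ Finset.range (N+1), m * (N - m) = (N+1).choose 3
  | 0 => by decide
  | (N+1) => by
    rw [Finset.sum_range_succ]
    have h1 : ∀ m ∈ Finset.range (N+1), m * (N+1-m) = m * (N-m) + m := by
      intro m hm
      simp only [Finset.mem_range] at hm
      rw [show N+1-m = (N-m)+1 from by omega]
      ring
    rw [Finset.sum_congr rfl h1, Finset.sum_add_distrib, sum_range_mul N,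
      sum_range_id_choose N]
    have hp : (N+1+1).choose 3 = (N+1).choose 2 + (N+1).choose 3 :=
      Nat.choose_succ_succ (N+1) 2
    have h2 : (N+1) * (N+1-(N+1)) = 0 := by simp
    omega

lemma sum_antidiagonal_mul (N : ℕ) :
    ∑ p ∈ Finset.HasAntidiagonal.antidiagonal N, p.1 * p.2 = (N+1).choose 3 := by
  rw [Finset.Nat.sum_antidiagonal_eq_sum_range_succ_mk]
  exact sum_range_mul N

lemma moment11 : ∀ (d : ℕ), ∀ N : ℕ, ∀ i j : Fin (d+2), i ≠ j →
    ∑ k ∈ Finset.Nat.antidiagonalTuple (d+2) N, k i * k j = (N+d+1).choose (d+3)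
  | 0, N, i, j, hij => by
    show ∑ k ∈ Finset.Nat.antidiagonalTuple 2 N, k i * k j = (N+1).choose 3
    rw [Finset.Nat.antidiagonalTuple_two, Finset.sum_map]
    fin_cases i <;> fin_cases j
    · exact absurd rfl hij
    · rw [← sum_antidiagonal_mul N]
      refine Finset.sum_congr rfl fun p _ => ?_
      simp [piFinTwoEquiv]
    · rw [← sum_antidiagonal_mul N]
      refine Finset.sum_congr rfl fun p _ => ?_
      simp [piFinTwoEquiv, mul_comm]
    · exact absurd rfl hij
  | (d+1), N, i, j, hij => by
    show ∑ k ∈ Finset.Nat.antidiagonalTuple (d+3) N, k i * k j = (N+(d+1)+1).choose (d+3+1)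
    have key : ∑ k ∈ Finset.Nat.antidiagonalTuple (d+3) N, k i * k j =
        ∑ k ∈ Finset.Nat.antidiagonalTuple (d+3) N, k (Fin.succ 0) * k (Fin.succ 1) := by
      have hab : (Fin.succ 0 : Fin (d+3)) ≠ Fin.succ 1 := by
        simp only [ne_eq, Fin.succ_inj]
        simp [Fin.ext_iff]
      have haj' : (Fin.succ 0 : Fin (d+3)) ≠ Equiv.swap (Fin.succ 0) i j := by
        intro h
        apply hij
        have h2 := congrArg (Equiv.swap (Fin.succ 0) i) h
        rwa [Equiv.swap_apply_left, Equiv.swap_apply_self] at h2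
      set σ : Equiv.Perm (Fin (d+3)) :=
        (Equiv.swap (Fin.succ 1) (Equiv.swap (Fin.succ 0) i j)).trans
          (Equiv.swap (Fin.succ 0) i) with hσ
      have hσa : σ (Fin.succ 0) = i := by
        rw [hσ, Equiv.trans_apply,
          Equiv.swap_apply_of_ne_of_ne hab haj', Equiv.swap_apply_left]
      have hσb : σ (Fin.succ 1) = j := by
        rw [hσ, Equiv.trans_apply, Equiv.swap_apply_left, Equiv.swap_apply_self]
      have hperm := sum_comp_perm (d+3) N σ (fun k => k (Fin.succ 0) * k (Fin.succ 1))
      simp only [Function.comp_apply, hσa, hσb] at hperm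
      exact hperm
    rw [key, sum_AT_cons]
    have hin : ∀ p ∈ Finset.HasAntidiagonal.antidiagonal N,
        (∑ x ∈ Finset.Nat.antidiagonalTuple (d+2) p.2, x 0 * x 1)
          = (p.2+(d+1)).choose (d+3) :=
      fun p _ => moment11 d p.2 0 1 (by simp [Fin.ext_iff])
    simp only [Fin.cons_succ]
    exact (Finset.sum_congr rfl hin).trans (sum_antidiagonal_choose N (d+1) (d+3) (Nat.le_add_right (d+1) 2))

lemma two_mul_choose_two : ∀ m : ℕ, 2 * (m+1).choose 2 = m * (m+1)
  | 0 => by simp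
  | (m+1) => by
    have hp : (m+1+1).choose 2 = (m+1).choose 1 + (m+1).choose 2 :=
      Nat.choose_succ_succ (m+1) 1
    have h1 : (m+1).choose 1 = m+1 := Nat.choose_one_right _
    have h2 := two_mul_choose_two m
    nlinarith [hp, h1, h2]

lemma choose_id (e N : ℕ) :
    ((e+1) * (e+2)) * (N+e+1).choose (e+2) = (N * (N+e+1)) * (N+e).choose N := by
  have h1 : (N+e+1).choose (e+2) * (e+2) = (N+e+1).choose (e+1) * N := by
    have h := Nat.choose_succ_right_eq (N+e+1) (e+1)
    rwa [show N+e+1-(e+1) = N from by omega] at h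
  have h2 : (N+e+1) * (N+e).choose e = (N+e+1).choose (e+1) * (e+1) :=
    Nat.add_one_mul_choose_eq (N+e) e
  have h3 : (N+e).choose e = (N+e).choose N := by
    rw [← Nat.choose_symm (show N ≤ N+e from by omega), show N+e-N = e from by omega]
  calc ((e+1) * (e+2)) * (N+e+1).choose (e+2)
      = (e+1) * ((N+e+1).choose (e+2) * (e+2)) := by ring
    _ = (e+1) * ((N+e+1).choose (e+1) * N) := by rw [h1]
    _ = N * ((N+e+1).choose (e+1) * (e+1)) := by ring
    _ = N * ((N+e+1) * (N+e).choose e) := by rw [h2]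
    _ = (N * (N+e+1)) * (N+e).choose N := by rw [h3]; ring

end Stmt14Aux

open Stmt14Aux in
/-- for `d ≥ 1`, `N ≥ 0` and `λ : Fin d → ℝ` with `Σ_i λ_i = 0`,
the sum over all occupation numbers `k : Fin d → ℕ` with `Σ_i k_i = N` of `(Σ_i k_i·λ_i)²`
equals `(N(N+d)/(d(d+1)))·(Σ_i λ_i²)·C(N+d−1, N)`. -/
theorem sum_occupation_sq (d N : ℕ) (hd : 1 ≤ d) (lam : Fin d → ℝ)
    (hlam : ∑ i, lam i = 0) :
    ∑ k ∈ Finset.Nat.antidiagonalTuple d N, (∑ i, (k i : ℝ) * lam i) ^ 2 =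
      ((N : ℝ) * (N + d) / (d * (d + 1))) * (∑ i, lam i ^ 2) * (N + d - 1).choose N := by
  obtain ⟨e, rfl⟩ : ∃ e, d = e + 1 := ⟨d - 1, by omega⟩
  rcases e with _ | e
  · -- d = 1
    have h0 : lam 0 = 0 := by simpa using hlam
    simp [h0]
  · -- d = e + 2
    show ∑ k ∈ Finset.Nat.antidiagonalTuple (e+2) N, (∑ i, (k i : ℝ) * lam i) ^ 2 =
      ((N : ℝ) * ((N:ℝ) + (((e+2 : ℕ)):ℝ)) / ((((e+2:ℕ)):ℝ) * ((((e+2:ℕ)):ℝ) + 1))) *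
        (∑ i, lam i ^ 2) * (((N + (e+2) - 1).choose N : ℕ) : ℝ)
    set A : ℝ := 2 * ((N+e+2).choose (e+3) : ℝ) - ((N+e+1).choose (e+2) : ℝ) with hA
    set B : ℝ := ((N+e+1).choose (e+3) : ℝ) with hB
    have hdiag : ∀ i : Fin (e+2),
        ∑ k ∈ Finset.Nat.antidiagonalTuple (e+2) N, (k i : ℝ) * (k i : ℝ) = A := by
      intro i
      have h2 : ∑ k ∈ Finset.Nat.antidiagonalTuple (e+2) N, ((k i + 1).choose 2)
          = (N+e+2).choose (e+3) := moment2 (e+1) N i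
      have h1 : ∑ k ∈ Finset.Nat.antidiagonalTuple (e+2) N, k i
          = (N+e+1).choose (e+2) := moment1 (e+1) N i
      have hterm : ∀ k ∈ Finset.Nat.antidiagonalTuple (e+2) N, (k i : ℝ) * (k i : ℝ)
          = 2 * (((k i + 1).choose 2 : ℕ) : ℝ) - (k i : ℝ) := by
        intro k _
        have hc := two_mul_choose_two (k i)
        have hc' : (2:ℝ) * (((k i + 1).choose 2 : ℕ) : ℝ) = (k i : ℝ) * ((k i : ℝ) + 1) := by
          exact_mod_cast congrArg (fun n : ℕ => (n : ℝ)) hc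
        nlinarith [hc']
      rw [Finset.sum_congr rfl hterm, Finset.sum_sub_distrib, ← Finset.mul_sum,
        ← Nat.cast_sum, ← Nat.cast_sum, h2, h1, hA]
    have hoff : ∀ i j : Fin (e+2), i ≠ j →
        ∑ k ∈ Finset.Nat.antidiagonalTuple (e+2) N, (k i : ℝ) * (k j : ℝ) = B := by
      intro i j hij
      have hm : ∑ k ∈ Finset.Nat.antidiagonalTuple (e+2) N, k i * k j
          = (N+e+1).choose (e+3) := moment11 e N i j hij
      have hcast : ∑ k ∈ Finset.Nat.antidiagonalTuple (e+2) N, (k i : ℝ) * (k j : ℝ)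
          = ((∑ k ∈ Finset.Nat.antidiagonalTuple (e+2) N, k i * k j : ℕ) : ℝ) := by
        push_cast
        rfl
      rw [hcast, hm, hB]
    have expand : ∑ k ∈ Finset.Nat.antidiagonalTuple (e+2) N, (∑ i, (k i : ℝ) * lam i) ^ 2
        = ∑ i, ∑ j, (lam i * lam j) *
            ∑ k ∈ Finset.Nat.antidiagonalTuple (e+2) N, (k i : ℝ) * (k j : ℝ) := by
      have hk : ∀ k : Fin (e+2) → ℕ, (∑ i, (k i : ℝ) * lam i) ^ 2
          = ∑ i, ∑ j, (lam i * lam j) * ((k i : ℝ) * (k j : ℝ)) := by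
        intro k
        rw [sq, Finset.sum_mul_sum]
        exact Finset.sum_congr rfl fun i _ => Finset.sum_congr rfl fun j _ => by ring
      rw [Finset.sum_congr rfl fun k _ => hk k, Finset.sum_comm]
      refine Finset.sum_congr rfl fun i _ => ?_
      rw [Finset.sum_comm]
      refine Finset.sum_congr rfl fun j _ => ?_
      rw [Finset.mul_sum]
    have inner : ∀ i : Fin (e+2),
        (∑ j, (lam i * lam j) *
          ∑ k ∈ Finset.Nat.antidiagonalTuple (e+2) N, (k i : ℝ) * (k j : ℝ))
        = lam i ^ 2 * (A - B) := by
      intro i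
      rw [← Finset.add_sum_erase _ _ (Finset.mem_univ i), hdiag i]
      have hrest : ∑ j ∈ Finset.univ.erase i, (lam i * lam j) *
            (∑ k ∈ Finset.Nat.antidiagonalTuple (e+2) N, (k i:ℝ) * (k j:ℝ))
          = ∑ j ∈ Finset.univ.erase i, (lam i * lam j) * B := by
        refine Finset.sum_congr rfl fun j hj => ?_
        rw [hoff i j (Ne.symm (Finset.ne_of_mem_erase hj))]
      have hsum_erase : ∑ j ∈ Finset.univ.erase i, lam j = - lam i := by
        have h := Finset.add_sum_erase Finset.univ lam (Finset.mem_univ i)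
        rw [hlam] at h
        linarith
      have hfac : ∑ j ∈ Finset.univ.erase i, (lam i * lam j) * B
          = (lam i * (- lam i)) * B := by
        rw [← Finset.sum_mul, ← Finset.mul_sum, hsum_erase]
      rw [hrest, hfac]
      ring
    rw [expand, Finset.sum_congr rfl fun i _ => inner i, ← Finset.sum_mul]
    have hAB : A - B = ((N+e+2).choose (e+3) : ℝ) := by
      rw [hA, hB]
      have hp : (N+e+2).choose (e+3) = (N+e+1).choose (e+2) + (N+e+1).choose (e+3) :=
        Nat.choose_succ_succ (N+e+1) (e+2)
      rw [hp]
      push_cast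
      ring
    rw [hAB]
    have hid' : (e+2)*(e+3) * (N+e+2).choose (e+3) = N*(N+e+2) * (N+e+1).choose N :=
      choose_id (e+1) N
    have hidR : (((e:ℝ)+2) * ((e:ℝ)+3)) * ((N+e+2).choose (e+3) : ℝ)
        = ((N:ℝ) * ((N:ℝ)+(e:ℝ)+2)) * (((N+e+1).choose N : ℕ) : ℝ) := by
      exact_mod_cast congrArg (fun n : ℕ => (n : ℝ)) hid'
    rw [show N + (e+2) - 1 = N+e+1 from by omega]
    push_cast
    have hne : ((e:ℝ)+2) * (((e:ℝ)+2) + 1) ≠ 0 := by positivity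
    rw [div_mul_eq_mul_div, div_mul_eq_mul_div, eq_div_iff hne]
    linear_combination (∑ i, lam i ^ 2) * hidR
end

section
/- Let d ≥ 2 and N ≥ 0 be integers. Then d·(d+1)·Σ_{i=0}^{N} i²·C(N−i+d−2, N−i) = N·(2N+d−1)·C(N+d−1, N), where C denotes the binomial coefficient. -/
open Finset

lemma sumB (e N : ℕ) : ∑ k ∈ range (N + 1), (k + e).choose e = (N + e + 1).choose (e + 1) := by
  induction N with
  | zero => simp
  | succ n ih =>
    rw [Finset.sum_range_succ, ih]
    have : (n + 1 + e + 1).choose (e + 1) = (n + e + 1).choose e + (n + e + 1).choose (e + 1) := by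
      have := Nat.choose_succ_succ (n + e + 1) e
      convert this using 2 <;> omega
    rw [this]
    have : (n + 1 + e) = (n + e + 1) := by omega
    rw [this]; ring

lemma sumA (e N : ℕ) : ∑ k ∈ range (N + 1), (N - k) * (k + e).choose e = (N + e + 1).choose (e + 2) := by
  induction N with
  | zero => simp [Nat.choose_eq_zero_of_lt]
  | succ n ih =>
    rw [Finset.sum_range_succ]
    have h1 : ∑ k ∈ range (n + 1), (n + 1 - k) * (k + e).choose e
        = ∑ k ∈ range (n + 1), ((n - k) * (k + e).choose e + (k + e).choose e) := by
      apply Finset.sum_congr rfl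
      intro k hk
      simp only [Finset.mem_range] at hk
      have : n + 1 - k = (n - k) + 1 := by omega
      rw [this]; ring
    rw [h1, Finset.sum_add_distrib, ih, sumB]
    have : (n + 1 + e + 1).choose (e + 2) = (n + e + 1).choose (e + 1) + (n + e + 1).choose (e + 2) := by
      have := Nat.choose_succ_succ (n + e + 1) (e + 1)
      convert this using 2 <;> omega
    rw [this]; simp; ring

lemma sumS (e N : ℕ) : ∑ k ∈ range (N + 1), (N - k) ^ 2 * (k + e).choose e
    = 2 * (N + e + 1).choose (e + 3) + (N + e + 1).choose (e + 2) := by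
  induction N with
  | zero => simp [Nat.choose_eq_zero_of_lt]
  | succ n ih =>
    rw [Finset.sum_range_succ]
    have h1 : ∑ k ∈ range (n + 1), (n + 1 - k) ^ 2 * (k + e).choose e
        = ∑ k ∈ range (n + 1), ((n - k) ^ 2 * (k + e).choose e
            + (2 * ((n - k) * (k + e).choose e) + (k + e).choose e)) := by
      apply Finset.sum_congr rfl
      intro k hk
      simp only [Finset.mem_range] at hk
      have : n + 1 - k = (n - k) + 1 := by omega
      rw [this]; ring
    rw [h1, Finset.sum_add_distrib, ih, Finset.sum_add_distrib, ← Finset.mul_sum, sumA, sumB]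
    have h3 : (n + 1 + e + 1).choose (e + 3) = (n + e + 1).choose (e + 2) + (n + e + 1).choose (e + 3) := by
      have := Nat.choose_succ_succ (n + e + 1) (e + 2)
      convert this using 2 <;> omega
    have h2 : (n + 1 + e + 1).choose (e + 2) = (n + e + 1).choose (e + 1) + (n + e + 1).choose (e + 2) := by
      have := Nat.choose_succ_succ (n + e + 1) (e + 1)
      convert this using 2 <;> omega
    rw [h3, h2]; simp; ring

/-- for integers `d ≥ 2` and `N ≥ 0`,
`d·(d+1)·Σ_{i=0}^{N} i²·C(N−i+d−2, N−i) = N·(2N+d−1)·C(N+d−1, N)`. -/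
theorem sum_sq_choose (d N : ℕ) (hd : 2 ≤ d) :
    d * (d + 1) * ∑ i ∈ Finset.range (N + 1), i ^ 2 * (N - i + d - 2).choose (N - i) =
      N * (2 * N + d - 1) * (N + d - 1).choose N := by
  obtain ⟨e, rfl⟩ : ∃ e, d = e + 2 := ⟨d - 2, by omega⟩
  have hsum : ∑ i ∈ Finset.range (N + 1), i ^ 2 * (N - i + (e + 2) - 2).choose (N - i)
      = ∑ k ∈ range (N + 1), (N - k) ^ 2 * (k + e).choose e := by
    rw [← Finset.sum_range_reflect]
    apply Finset.sum_congr rfl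
    intro k hk
    simp only [Finset.mem_range] at hk
    have h1 : N + 1 - 1 - k = N - k := by omega
    have h2 : N - (N - k) = k := by omega
    have h3 : k + (e + 2) - 2 = k + e := by omega
    have h4 := Nat.choose_symm (show e ≤ k + e by omega)
    rw [Nat.add_sub_cancel] at h4
    rw [h1, h2, h3, h4]
  rw [hsum, sumS]
  rcases Nat.eq_zero_or_pos N with rfl | hN
  · simp [Nat.choose_eq_zero_of_lt]
  obtain ⟨m, rfl⟩ : ∃ m, N = m + 1 := ⟨N - 1, by omega⟩
  have hsym : (m + 1 + (e + 2) - 1).choose (m + 1) = (m + e + 2).choose (e + 1) := by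
    rw [show m + 1 + (e + 2) - 1 = m + e + 2 by omega,
      show m + 1 = (m + e + 2) - (e + 1) by omega]
    exact Nat.choose_symm (by omega)
  rw [hsym]
  have he1 : m + 1 + e + 1 = m + e + 2 := by omega
  rw [he1]
  set a := (m + e + 2).choose (e + 1) with ha
  set b := (m + e + 2).choose (e + 2) with hb
  set c := (m + e + 2).choose (e + 3) with hc
  have h1 : c * (e + 3) = b * m := by
    have := Nat.choose_succ_right_eq (m + e + 2) (e + 2)
    simpa [← hb, ← hc, show m + e + 2 - (e + 2) = m by omega] using this
  have h2 : b * (e + 2) = a * (m + 1) := by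
    have := Nat.choose_succ_right_eq (m + e + 2) (e + 1)
    simpa [← ha, ← hb, show m + e + 2 - (e + 1) = m + 1 by omega] using this
  have hgoal : (e + 2) * (e + 3) * (2 * c + b) = (m + 1) * (2 * (m + 1) + (e + 2) - 1) * a := by
    have : 2 * (m + 1) + (e + 2) - 1 = 2 * m + e + 3 := by omega
    rw [this]
    calc (e + 2) * (e + 3) * (2 * c + b)
        = 2 * (e + 2) * (c * (e + 3)) + (e + 3) * (b * (e + 2)) := by ring
      _ = 2 * (e + 2) * (b * m) + (e + 3) * (a * (m + 1)) := by rw [h1, h2]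
      _ = 2 * m * (b * (e + 2)) + (e + 3) * (a * (m + 1)) := by ring
      _ = 2 * m * (a * (m + 1)) + (e + 3) * (a * (m + 1)) := by rw [h2]
      _ = (m + 1) * (2 * m + e + 3) * a := by ring
  exact hgoal
end

section
/- Let ρ ∈ M_D(ℂ) be a density matrix and H ∈ M_D(ℂ) be Hermitian. Then the quantum Fisher information satisfies F(ρ,H) ≥ ‖[H,ρ]‖₁², where [H,ρ] := Hρ − ρH and ‖A‖₁ := tr√(A†A) is the trace norm. -/
open Matrix
open scoped ComplexOrder

noncomputable section

namespace Paper

/-- The quantum Fisher information of a state `ρ` with Hamiltonian `H`. -/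
def QFI {n : Type*} [Fintype n] [DecidableEq n] (ρ H : Matrix n n ℂ) : ℝ :=
  if hρ : ρ.IsHermitian then
    2 * ∑ j, ∑ k,
      if hρ.eigenvalues j + hρ.eigenvalues k = 0 then 0
      else ((hρ.eigenvalues j - hρ.eigenvalues k) ^ 2 / (hρ.eigenvalues j + hρ.eigenvalues k)) *
        ‖star (fun i => (hρ.eigenvectorUnitary : Matrix n n ℂ) i j) ⬝ᵥ
          (H *ᵥ fun i => (hρ.eigenvectorUnitary : Matrix n n ℂ) i k)‖ ^ 2
  else 0

open Classical in
/-- The square root of a positive semidefinite matrix (junk value `0` otherwise). -/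
def msqrt {n : Type*} [Fintype n] [DecidableEq n] (A : Matrix n n ℂ) : Matrix n n ℂ :=
  if hA : A.PosSemidef then
    (hA.1.eigenvectorUnitary : Matrix n n ℂ) *
      diagonal (((↑) : ℝ → ℂ) ∘ Real.sqrt ∘ hA.1.eigenvalues) *
      (star hA.1.eigenvectorUnitary : Matrix n n ℂ)
  else 0

/-- The trace norm `‖A‖₁ = tr √(A†A)` of a matrix. -/
def traceNorm {n : Type*} [Fintype n] [DecidableEq n] (A : Matrix n n ℂ) : ℝ :=
  (Matrix.trace (msqrt (Aᴴ * A))).re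

private lemma ofReal_eq (x : ℝ) : (RCLike.ofReal x : ℂ) = (x : ℂ) := rfl

private lemma dot_eq {D : ℕ} (H U : Matrix (Fin D) (Fin D) ℂ) (j k : Fin D) :
    star (fun i => U i j) ⬝ᵥ (H *ᵥ fun i => U i k) = (star U * H * U) j k := by
  simp only [dotProduct, Matrix.mulVec, Matrix.mul_apply, Matrix.star_apply,
    Pi.star_apply, dotProduct, Finset.sum_mul, Finset.mul_sum]
  rw [Finset.sum_comm]
  refine Finset.sum_congr rfl fun i _ => Finset.sum_congr rfl fun l _ => by ring

private lemma col_sq_sum {D : ℕ} (V : Matrix (Fin D) (Fin D) ℂ) (h : star V * V = 1) (j : Fin D) :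
    ∑ i, ‖V i j‖ ^ 2 = 1 := by
  have h1 := congrArg (fun M : Matrix (Fin D) (Fin D) ℂ => M j j) h
  simp only [Matrix.mul_apply, Matrix.star_apply, Matrix.one_apply_eq] at h1
  have h2 : ∑ i, (Complex.normSq (V i j) : ℂ) = 1 := by
    rw [← h1]
    exact Finset.sum_congr rfl fun i _ => by rw [Complex.normSq_eq_conj_mul_self]; rfl
  have h3 := congrArg Complex.re h2
  simp only [Complex.re_sum, Complex.ofReal_re, Complex.one_re] at h3
  rw [← h3]
  exact Finset.sum_congr rfl fun i _ => (Complex.sq_norm _)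

private lemma row_sq_sum {D : ℕ} (V : Matrix (Fin D) (Fin D) ℂ) (h : V * star V = 1) (i : Fin D) :
    ∑ j, ‖V i j‖ ^ 2 = 1 := by
  have h1 := congrArg (fun M : Matrix (Fin D) (Fin D) ℂ => M i i) h
  simp only [Matrix.mul_apply, Matrix.star_apply, Matrix.one_apply_eq] at h1
  have h2 : ∑ j, (Complex.normSq (V i j) : ℂ) = 1 := by
    rw [← h1]
    exact Finset.sum_congr rfl fun jj _ => by
      rw [Complex.normSq_eq_conj_mul_self, mul_comm]; rfl
  have h3 := congrArg Complex.re h2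
  simp only [Complex.re_sum, Complex.ofReal_re, Complex.one_re] at h3
  rw [← h3]
  exact Finset.sum_congr rfl fun jj _ => (Complex.sq_norm _)

/-- For any unitary `V`, `|tr (V [H,ρ])|² ≤ F(ρ,H)`. -/
private lemma key_bound {D : ℕ} (ρ H : Matrix (Fin D) (Fin D) ℂ)
    (hρ : ρ.PosSemidef) (htr : ρ.trace = 1)
    (V : Matrix (Fin D) (Fin D) ℂ) (hV : V ∈ Matrix.unitaryGroup (Fin D) ℂ) :
    ‖Matrix.trace (V * (H * ρ - ρ * H))‖ ^ 2 ≤ QFI ρ H := by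
  have hρ' : ρ.IsHermitian := hρ.1
  set U : Matrix (Fin D) (Fin D) ℂ := (hρ'.eigenvectorUnitary : Matrix (Fin D) (Fin D) ℂ) with hUdef
  set p : Fin D → ℝ := hρ'.eigenvalues with hpdef
  have hU1 : star U * U = 1 := Matrix.mem_unitaryGroup_iff'.mp hρ'.eigenvectorUnitary.2
  have hU2 : U * star U = 1 := Matrix.mem_unitaryGroup_iff.mp hρ'.eigenvectorUnitary.2
  set P : Matrix (Fin D) (Fin D) ℂ := diagonal (RCLike.ofReal ∘ p) with hPdef
  have hspec : ρ = U * P * star U := hρ'.spectral_theorem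
  set V' : Matrix (Fin D) (Fin D) ℂ := star U * V * U with hV'def
  set H' : Matrix (Fin D) (Fin D) ℂ := star U * H * U with hH'def
  have hpnn : ∀ i, 0 ≤ p i := fun i => hρ.eigenvalues_nonneg i
  have hpsum : ∑ i, p i = 1 := by
    have h0 : Matrix.trace ρ = ∑ i, ((p i : ℝ) : ℂ) := by
      rw [hspec, Matrix.trace_mul_cycle, hU1, Matrix.one_mul, hPdef, Matrix.trace_diagonal]
      exact Finset.sum_congr rfl fun i _ => rfl
    rw [htr] at h0
    have h1 := congrArg Complex.re h0.symm
    simpa only [Complex.re_sum, Complex.ofReal_re, Complex.one_re] using h1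
  have hV'mem : V' ∈ Matrix.unitaryGroup (Fin D) ℂ :=
    mul_mem (mul_mem (Unitary.star_mem hρ'.eigenvectorUnitary.2) hV) hρ'.eigenvectorUnitary.2
  have hV'1 : star V' * V' = 1 := Matrix.mem_unitaryGroup_iff'.mp hV'mem
  have hV'2 : V' * star V' = 1 := Matrix.mem_unitaryGroup_iff.mp hV'mem
  have htrace_eq : Matrix.trace (V * (H * ρ - ρ * H)) =
      Matrix.trace (V' * (H' * P - P * H')) := by
    have e : H * ρ - ρ * H = U * (H' * P - P * H') * star U := by
      rw [Matrix.mul_sub, Matrix.sub_mul]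
      congr 1
      · calc H * ρ = (U * star U) * H * (U * P * star U) := by
              rw [hU2, hspec, Matrix.one_mul]
          _ = U * (H' * P) * star U := by rw [hH'def]; simp only [Matrix.mul_assoc]
      · calc ρ * H = (U * P * star U) * H * (U * star U) := by
              rw [hU2, hspec, Matrix.mul_one]
          _ = U * (P * H') * star U := by rw [hH'def]; simp only [Matrix.mul_assoc]
    rw [e]
    calc Matrix.trace (V * (U * (H' * P - P * H') * star U))
        = Matrix.trace ((V * (U * (H' * P - P * H'))) * star U) := by
          simp only [Matrix.mul_assoc]
      _ = Matrix.trace (star U * (V * (U * (H' * P - P * H')))) :=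
          (Matrix.trace_mul_comm _ _)
      _ = Matrix.trace (V' * (H' * P - P * H')) := by
          rw [hV'def]; simp only [Matrix.mul_assoc]
  have hcoord : Matrix.trace (V' * (H' * P - P * H')) =
      ∑ i, ∑ j, V' i j * H' j i * (((p i - p j : ℝ)) : ℂ) := by
    rw [hPdef]
    simp only [Matrix.trace, Matrix.diag, Matrix.mul_apply, Matrix.sub_apply,
      Matrix.diagonal_apply, Function.comp, ite_mul, mul_ite, zero_mul, mul_zero,
      Finset.sum_ite_eq, Finset.sum_ite_eq', Finset.mem_univ, if_true, ofReal_eq]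
    refine Finset.sum_congr rfl fun i _ => Finset.sum_congr rfl fun j _ => by
      push_cast; ring
  have habs : ‖Matrix.trace (V * (H * ρ - ρ * H))‖ ≤
      ∑ i, ∑ j, ‖V' i j‖ * ‖H' j i‖ * |p i - p j| := by
    rw [htrace_eq, hcoord]
    refine ((norm_sum_le _ _).trans
      (Finset.sum_le_sum fun i _ => norm_sum_le _ _)).trans ?_
    refine le_of_eq (Finset.sum_congr rfl fun i _ => Finset.sum_congr rfl fun j _ => ?_)
    rw [norm_mul, norm_mul, Complex.norm_real, Real.norm_eq_abs]
  set f : Fin D × Fin D → ℝ := fun x =>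
    if p x.1 + p x.2 = 0 then 0
    else (|p x.1 - p x.2| / Real.sqrt (p x.1 + p x.2)) * ‖H' x.1 x.2‖ with hfdef
  set g : Fin D × Fin D → ℝ := fun x =>
    Real.sqrt (p x.1 + p x.2) * ‖V' x.2 x.1‖ with hgdef
  have point : ∀ jj ii : Fin D, f (jj, ii) * g (jj, ii) =
      ‖V' ii jj‖ * ‖H' jj ii‖ * |p ii - p jj| := by
    intro jj ii
    by_cases h : p jj + p ii = 0
    · have h1 : p jj = 0 := le_antisymm (by linarith [hpnn ii, hpnn jj]) (hpnn jj)
      have h2 : p ii = 0 := le_antisymm (by linarith [hpnn ii, hpnn jj]) (hpnn ii)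
      simp [hfdef, hgdef, h, h1, h2]
    · have hpos : 0 < p jj + p ii :=
        lt_of_le_of_ne (add_nonneg (hpnn jj) (hpnn ii)) (Ne.symm h)
      have hs : Real.sqrt (p jj + p ii) ≠ 0 :=
        ne_of_gt (Real.sqrt_pos.mpr hpos)
      simp only [hfdef, hgdef, if_neg h]
      rw [abs_sub_comm (p ii) (p jj)]
      field_simp
  have hfg : ∑ i, ∑ j, ‖V' i j‖ * ‖H' j i‖ * |p i - p j| =
      ∑ x : Fin D × Fin D, f x * g x := by
    rw [Fintype.sum_prod_type]
    conv_lhs => rw [Finset.sum_comm]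
    exact Finset.sum_congr rfl fun jj _ => Finset.sum_congr rfl fun ii _ =>
      (point jj ii).symm
  have hg2 : ∑ x : Fin D × Fin D, g x ^ 2 = 2 := by
    have hterm : ∀ jj ii : Fin D, g (jj, ii) ^ 2 =
        p jj * ‖V' ii jj‖ ^ 2 + p ii * ‖V' ii jj‖ ^ 2 := by
      intro jj ii
      have hsq : Real.sqrt (p jj + p ii) ^ 2 = p jj + p ii :=
        Real.sq_sqrt (add_nonneg (hpnn jj) (hpnn ii))
      simp only [hgdef, mul_pow, hsq]
      ring
    rw [Fintype.sum_prod_type]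
    calc ∑ jj, ∑ ii, g (jj, ii) ^ 2
        = ∑ jj, ∑ ii, (p jj * ‖V' ii jj‖ ^ 2
            + p ii * ‖V' ii jj‖ ^ 2) :=
          Finset.sum_congr rfl fun jj _ => Finset.sum_congr rfl fun ii _ => hterm jj ii
      _ = (∑ jj, ∑ ii, p jj * ‖V' ii jj‖ ^ 2)
            + ∑ jj, ∑ ii, p ii * ‖V' ii jj‖ ^ 2 := by
          rw [← Finset.sum_add_distrib]
          exact Finset.sum_congr rfl fun jj _ => Finset.sum_add_distrib
      _ = (∑ jj, p jj) + ∑ jj, ∑ ii, p ii * ‖V' ii jj‖ ^ 2 := by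
          congr 1
          refine Finset.sum_congr rfl fun jj _ => ?_
          rw [← Finset.mul_sum, col_sq_sum V' hV'1 jj, mul_one]
      _ = (∑ jj, p jj) + ∑ ii, p ii := by
          congr 1
          rw [Finset.sum_comm]
          refine Finset.sum_congr rfl fun ii _ => ?_
          rw [← Finset.mul_sum, row_sq_sum V' hV'2 ii, mul_one]
      _ = 2 := by rw [hpsum]; norm_num
  have hf2 : QFI ρ H = 2 * ∑ x : Fin D × Fin D, f x ^ 2 := by
    rw [QFI, dif_pos hρ']
    congr 1
    rw [Fintype.sum_prod_type]
    refine Finset.sum_congr rfl fun j _ => Finset.sum_congr rfl fun k _ => ?_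
    rw [dot_eq]
    rw [← hpdef, ← hUdef, ← hH'def]
    by_cases h : p j + p k = 0
    · simp [hfdef, h]
    · have hpos : 0 < p j + p k :=
        lt_of_le_of_ne (add_nonneg (hpnn j) (hpnn k)) (Ne.symm h)
      simp only [hfdef, if_neg h]
      rw [mul_pow, div_pow, sq_abs, Real.sq_sqrt (le_of_lt hpos)]
  have habs' : ‖Matrix.trace (V * (H * ρ - ρ * H))‖ ≤
      ∑ x : Fin D × Fin D, f x * g x := by rw [← hfg]; exact habs
  calc ‖Matrix.trace (V * (H * ρ - ρ * H))‖ ^ 2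
      ≤ (∑ x : Fin D × Fin D, f x * g x) ^ 2 :=
        pow_le_pow_left₀ (norm_nonneg _) habs' 2
    _ ≤ (∑ x : Fin D × Fin D, f x ^ 2) * ∑ x : Fin D × Fin D, g x ^ 2 :=
        Finset.sum_mul_sq_le_sq_mul_sq _ _ _
    _ = QFI ρ H := by rw [hg2, hf2]; ring

/-- the quantum Fisher information is lower bounded by the squared
trace norm of the commutator: `F(ρ,H) ≥ ‖[H,ρ]‖₁²`. -/
theorem qfi_ge_traceNorm_commutator_sq {D : ℕ} (ρ H : Matrix (Fin D) (Fin D) ℂ)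
    (hρ : ρ.PosSemidef) (htr : ρ.trace = 1) (hH : H.IsHermitian) :
    traceNorm (H * ρ - ρ * H) ^ 2 ≤ QFI ρ H := by
  set A : Matrix (Fin D) (Fin D) ℂ := H * ρ - ρ * H with hAdef
  have hAst : Aᴴ = -A := by
    rw [hAdef, Matrix.conjTranspose_sub, Matrix.conjTranspose_mul,
      Matrix.conjTranspose_mul, hρ.1.eq, hH.eq]
    abel
  set M : Matrix (Fin D) (Fin D) ℂ := Complex.I • A with hMdef
  have hM : M.IsHermitian := by
    rw [Matrix.IsHermitian, hMdef, Matrix.conjTranspose_smul, hAst]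
    rw [Complex.star_def, Complex.conj_I]
    rw [smul_neg, neg_smul, neg_neg]
  set W : Matrix (Fin D) (Fin D) ℂ := (hM.eigenvectorUnitary : Matrix (Fin D) (Fin D) ℂ) with hWdef
  set μ : Fin D → ℝ := hM.eigenvalues with hμdef
  have hW1 : star W * W = 1 := Matrix.mem_unitaryGroup_iff'.mp hM.eigenvectorUnitary.2
  have hW2 : W * star W = 1 := Matrix.mem_unitaryGroup_iff.mp hM.eigenvectorUnitary.2
  have hMspec : M = W * diagonal (RCLike.ofReal ∘ μ) * star W := hM.spectral_theorem
  have conj_mul : ∀ d e : Fin D → ℂ,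
      (W * diagonal d * star W) * (W * diagonal e * star W) =
        W * diagonal (fun i => d i * e i) * star W := by
    intro d e
    calc (W * diagonal d * star W) * (W * diagonal e * star W)
        = W * diagonal d * (star W * W) * diagonal e * star W := by
          simp only [Matrix.mul_assoc]
      _ = W * (diagonal d * diagonal e) * star W := by
          rw [hW1]; simp only [Matrix.mul_one, Matrix.mul_assoc]
      _ = W * diagonal (fun i => d i * e i) * star W := by rw [Matrix.diagonal_mul_diagonal]
  have hAA : Aᴴ * A = M * M := by
    rw [hAst, hMdef, Matrix.neg_mul, smul_mul_assoc, mul_smul_comm, smul_smul,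
      Complex.I_mul_I, neg_smul, one_smul]
  set R : Matrix (Fin D) (Fin D) ℂ :=
    W * diagonal (fun i => ((|μ i| : ℝ) : ℂ)) * star W with hRdef
  have hdiagpsd : (diagonal (fun i => ((|μ i| : ℝ) : ℂ))).PosSemidef := by
    refine Matrix.posSemidef_diagonal_iff.mpr fun i => ?_
    rw [Complex.zero_le_real]
    exact abs_nonneg _
  have hRpsd : R.PosSemidef := by
    rw [hRdef, Matrix.star_eq_conjTranspose]
    exact hdiagpsd.mul_mul_conjTranspose_same W
  have hMsq : M * M = W * diagonal (fun i => ((μ i : ℝ) : ℂ) * ((μ i : ℝ) : ℂ)) * star W := by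
    conv_lhs => rw [hMspec]
    exact conj_mul _ _
  have hRsq : R ^ 2 = Aᴴ * A := by
    have habs2 : (fun i => ((|μ i| : ℝ) : ℂ) * ((|μ i| : ℝ) : ℂ)) =
        fun i => ((μ i : ℝ) : ℂ) * ((μ i : ℝ) : ℂ) := by
      funext i
      rw [← Complex.ofReal_mul, ← Complex.ofReal_mul, ← abs_mul, abs_mul_self]
    rw [pow_two, hRdef, conj_mul, hAA, hMsq, habs2]
  have hmsqrt : msqrt (Aᴴ * A) = R := by
    have hpsd : (Aᴴ * A).PosSemidef := Matrix.posSemidef_conjTranspose_mul_self A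
    rw [msqrt, dif_pos hpsd]
    open scoped MatrixOrder in
    have key : (hpsd.1.eigenvectorUnitary : Matrix (Fin D) (Fin D) ℂ) *
        diagonal (((↑) : ℝ → ℂ) ∘ Real.sqrt ∘ hpsd.1.eigenvalues) *
        (star hpsd.1.eigenvectorUnitary : Matrix (Fin D) (Fin D) ℂ) = CFC.sqrt (Aᴴ * A) := by
      open scoped MatrixOrder in
      rw [CFC.sqrt_eq_cfc, cfc_nnreal_eq_real _ (Aᴴ * A) (Matrix.nonneg_iff_posSemidef.mpr hpsd),
        hpsd.1.cfc_eq]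
      simp only [IsHermitian.cfc, Unitary.conjStarAlgAut_apply]
      congr 3
      funext i
      simp [Real.coe_sqrt, Real.coe_toNNReal', max_eq_left (hpsd.eigenvalues_nonneg i)]
    rw [key]
    open scoped MatrixOrder in
    exact CFC.sqrt_unique (by rw [← hRsq, pow_two]) (Matrix.nonneg_iff_posSemidef.mpr hRpsd)
  have htrR : traceNorm A = ∑ i, |μ i| := by
    rw [traceNorm, hmsqrt, hRdef, Matrix.trace_mul_cycle, hW1, Matrix.one_mul,
      Matrix.trace_diagonal]
    simp only [Complex.re_sum, Complex.ofReal_re]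
  -- the sign unitary
  set sg : Fin D → ℝ := fun i => if 0 ≤ μ i then 1 else -1 with hsgdef
  set S : Matrix (Fin D) (Fin D) ℂ :=
    W * diagonal (fun i => ((sg i : ℝ) : ℂ)) * star W with hSdef
  have hdgstar : star (diagonal (fun i => ((sg i : ℝ) : ℂ))) =
      diagonal (fun i => ((sg i : ℝ) : ℂ)) := by
    have h0 : (star fun i => ((sg i : ℝ) : ℂ)) = fun i => ((sg i : ℝ) : ℂ) := by
      funext i
      simp [Pi.star_apply, Complex.star_def, Complex.conj_ofReal]
    rw [Matrix.star_eq_conjTranspose, Matrix.diagonal_conjTranspose, h0]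
  have hSstar : star S = S := by
    rw [hSdef, StarMul.star_mul, StarMul.star_mul, star_star, hdgstar]
    simp only [Matrix.mul_assoc]
  have hSS : S * S = 1 := by
    rw [hSdef, conj_mul]
    have h1 : (fun i => ((sg i : ℝ) : ℂ) * ((sg i : ℝ) : ℂ)) = fun _ => (1 : ℂ) := by
      funext i
      by_cases h : 0 ≤ μ i <;> simp [hsgdef, h] <;> norm_num
    rw [h1, Matrix.diagonal_one, Matrix.mul_one, hW2]
  have hSmem : S ∈ Matrix.unitaryGroup (Fin D) ℂ := by
    rw [Matrix.mem_unitaryGroup_iff']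
    rw [hSstar, hSS]
  have htrSM : Matrix.trace (S * M) = ((∑ i, |μ i| : ℝ) : ℂ) := by
    conv_lhs => rw [hSdef, hMspec, conj_mul]
    rw [Matrix.trace_mul_cycle, hW1, Matrix.one_mul, Matrix.trace_diagonal]
    rw [Complex.ofReal_sum]
    refine Finset.sum_congr rfl fun i _ => ?_
    show ((sg i : ℝ) : ℂ) * ((μ i : ℝ) : ℂ) = ((|μ i| : ℝ) : ℂ)
    rw [← Complex.ofReal_mul]
    congr 1
    by_cases h : 0 ≤ μ i
    · rw [hsgdef]; simp only [if_pos h]; rw [one_mul, abs_of_nonneg h]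
    · rw [hsgdef]; simp only [if_neg h]
      rw [abs_of_neg (lt_of_not_ge h)]; ring
  have htrSA : Matrix.trace (S * M) = Complex.I * Matrix.trace (S * A) := by
    rw [hMdef, mul_smul_comm, Matrix.trace_smul, smul_eq_mul]
  have habsSA : ‖Matrix.trace (S * A)‖ = ∑ i, |μ i| := by
    have h1 : Complex.I * Matrix.trace (S * A) = ((∑ i, |μ i| : ℝ) : ℂ) := by
      rw [← htrSA, htrSM]
    have h2 := congrArg (‖·‖) h1
    rw [norm_mul, Complex.norm_I, one_mul, Complex.norm_real, Real.norm_eq_abs,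
      abs_of_nonneg (Finset.sum_nonneg fun i _ => abs_nonneg _)] at h2
    exact h2
  have hfinal := key_bound ρ H hρ htr S hSmem
  rw [← hAdef] at hfinal
  rw [htrR, ← habsSA]
  exact hfinal

end Paper
end
end

section
/- Let ρ ∈ M_D(ℂ) be a density matrix and H ∈ M_D(ℂ) be Hermitian. Then the quantum Fisher information satisfies F(ρ,H) ≥ ‖[H,ρ]‖_HS², where [H,ρ] := Hρ − ρH and ‖A‖_HS := √(tr(A†A)) is the Hilbert–Schmidt (Frobenius) norm. -/
open Matrix
open scoped ComplexOrder

noncomputable section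

namespace Paper

/-- The Hilbert-Schmidt (Frobenius) norm `‖A‖_HS = √(tr(A†A))` of a matrix. -/
def hsNorm {n : Type*} [Fintype n] [DecidableEq n] (A : Matrix n n ℂ) : ℝ :=
  Real.sqrt (Matrix.trace (Aᴴ * A)).re

/-- the quantum Fisher information is lower bounded by the squared
Hilbert-Schmidt norm of the commutator: `F(ρ,H) ≥ ‖[H,ρ]‖_HS²`. -/
theorem qfi_ge_hsNorm_commutator_sq {D : ℕ} (ρ H : Matrix (Fin D) (Fin D) ℂ)
    (hρ : ρ.PosSemidef) (htr : ρ.trace = 1) (hH : H.IsHermitian) :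
    hsNorm (H * ρ - ρ * H) ^ 2 ≤ QFI ρ H := by
  have hherm : ρ.IsHermitian := hρ.1
  set U : Matrix (Fin D) (Fin D) ℂ := (hherm.eigenvectorUnitary : Matrix (Fin D) (Fin D) ℂ)
    with hU
  set p : Fin D → ℝ := hherm.eigenvalues with hp
  have hUl : Uᴴ * U = 1 := by
    rw [← star_eq_conjTranspose]
    exact (hherm.eigenvectorUnitary).2.1
  have hUr : U * Uᴴ = 1 := by
    rw [← star_eq_conjTranspose]
    exact (hherm.eigenvectorUnitary).2.2
  set Dg : Matrix (Fin D) (Fin D) ℂ := diagonal (fun i => (p i : ℂ)) with hDg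
  have hspec : ρ = U * Dg * Uᴴ := by
    rw [← star_eq_conjTranspose]
    exact hherm.spectral_theorem
  set G : Matrix (Fin D) (Fin D) ℂ := Uᴴ * H * U with hG
  -- eigenvalues are nonneg
  have hpnn : ∀ j, 0 ≤ p j := fun j => hρ.eigenvalues_nonneg j
  -- eigenvalues sum to 1
  have hsum : ∑ j, p j = 1 := by
    have h1 : ρ.trace = ∑ j, (p j : ℂ) := by
      rw [hspec, trace_mul_cycle, hUl, one_mul, hDg, trace_diagonal]
    rw [htr] at h1
    have := congrArg Complex.re h1
    simpa using this.symm
  have hple : ∀ j, p j ≤ 1 := by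
    intro j
    rw [← hsum]
    exact Finset.single_le_sum (fun i _ => hpnn i) (Finset.mem_univ j)
  -- commutator in eigenbasis
  have hcomm : H * ρ - ρ * H = U * (G * Dg - Dg * G) * Uᴴ := by
    rw [hspec, hG, mul_sub, sub_mul]
    congr 1
    · rw [show U * (Uᴴ * H * U * Dg) = U * Uᴴ * (H * (U * Dg)) by noncomm_ring, hUr, one_mul]
      noncomm_ring
    · rw [show U * (Dg * (Uᴴ * H * U)) * Uᴴ = U * Dg * Uᴴ * H * (U * Uᴴ) by noncomm_ring,
        hUr, mul_one]
  -- the trace of the squared commutator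
  have htrace : (Matrix.trace ((H * ρ - ρ * H)ᴴ * (H * ρ - ρ * H))).re
      = ∑ j, ∑ k, (p j - p k) ^ 2 * ‖G j k‖ ^ 2 := by
    set M : Matrix (Fin D) (Fin D) ℂ := G * Dg - Dg * G with hM
    have h1 : (H * ρ - ρ * H)ᴴ * (H * ρ - ρ * H) = U * (Mᴴ * M) * Uᴴ := by
      rw [hcomm]
      have h2 : (U * M * Uᴴ)ᴴ = U * Mᴴ * Uᴴ := by
        simp [conjTranspose_mul, mul_assoc]
      rw [h2]
      calc U * Mᴴ * Uᴴ * (U * M * Uᴴ) = U * Mᴴ * (Uᴴ * U) * (M * Uᴴ) := by noncomm_ring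
        _ = U * (Mᴴ * M) * Uᴴ := by rw [hUl, mul_one]; noncomm_ring
    have h3 : Matrix.trace ((H * ρ - ρ * H)ᴴ * (H * ρ - ρ * H)) = Matrix.trace (Mᴴ * M) := by
      rw [h1, trace_mul_cycle, ← mul_assoc, hUl, one_mul]
    have hMjk : ∀ j k, M j k = ((p k : ℂ) - (p j : ℂ)) * G j k := by
      intro j k
      simp [hM, hDg, Matrix.sub_apply, mul_diagonal, diagonal_mul]
      ring
    have habs : ∀ z : ℂ, (star z * z).re = ‖z‖ ^ 2 := by
      intro z
      rw [RCLike.star_def, mul_comm, Complex.mul_conj, Complex.ofReal_re,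
        Complex.normSq_eq_norm_sq]
    calc (Matrix.trace ((H * ρ - ρ * H)ᴴ * (H * ρ - ρ * H))).re
        = ∑ k, ∑ j, (star (M j k) * M j k).re := by
          rw [h3, Matrix.trace]
          simp only [diag_apply, Matrix.mul_apply, conjTranspose_apply, RCLike.star_def]
          rw [Complex.re_sum]
          exact Finset.sum_congr rfl fun k _ => Complex.re_sum _ _
      _ = ∑ k, ∑ j, (p k - p j) ^ 2 * ‖G j k‖ ^ 2 := by
          refine Finset.sum_congr rfl fun k _ => Finset.sum_congr rfl fun j _ => ?_
          rw [hMjk j k, habs, norm_mul, mul_pow,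
            show ((p k : ℂ) - (p j : ℂ)) = ((p k - p j : ℝ) : ℂ) by push_cast; ring,
            Complex.norm_real, Real.norm_eq_abs, _root_.sq_abs]
      _ = ∑ j, ∑ k, (p j - p k) ^ 2 * ‖G j k‖ ^ 2 := by
          rw [Finset.sum_comm]
          exact Finset.sum_congr rfl fun j _ => Finset.sum_congr rfl fun k _ => by ring_nf
  -- the dot products in QFI are entries of G
  have hGdot : ∀ j k, star (fun i => U i j) ⬝ᵥ (H *ᵥ fun i => U i k) = G j k := by
    intro j k
    simp only [hG, Matrix.mul_apply, Matrix.mulVec, dotProduct, conjTranspose_apply,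
      Pi.star_apply, RCLike.star_def, Finset.sum_mul, Finset.mul_sum]
    rw [Finset.sum_comm]
    refine Finset.sum_congr rfl fun l _ => Finset.sum_congr rfl fun i _ => ?_
    ring
  -- unfold hsNorm and QFI
  have htrnn : 0 ≤ (Matrix.trace ((H * ρ - ρ * H)ᴴ * (H * ρ - ρ * H))).re := by
    rw [htrace]
    positivity
  rw [hsNorm, Real.sq_sqrt htrnn, htrace, QFI, dif_pos hherm]
  simp only [← hU, ← hp, hGdot]
  rw [Finset.mul_sum]
  refine Finset.sum_le_sum fun j _ => ?_
  rw [Finset.mul_sum]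
  refine Finset.sum_le_sum fun k _ => ?_
  by_cases h : p j + p k = 0
  · have hj : p j = 0 := le_antisymm (by linarith [hpnn k]) (hpnn j)
    have hk : p k = 0 := le_antisymm (by linarith [hpnn j]) (hpnn k)
    simp [h, hj, hk]
  · rw [if_neg h]
    have hpos : 0 < p j + p k := lt_of_le_of_ne (by linarith [hpnn j, hpnn k]) (Ne.symm h)
    have key : (p j - p k) ^ 2 ≤ 2 * ((p j - p k) ^ 2 / (p j + p k)) := by
      rw [mul_div_assoc', le_div_iff₀ hpos]
      nlinarith [sq_nonneg (p j - p k), hple j, hple k]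
    have := mul_le_mul_of_nonneg_right key (sq_nonneg ‖G j k‖)
    linarith [this]

end Paper
end
end
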